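/- arXiv:math/9806122 — 2 statements merged into one kernel-verified Lean document; each statement's English description precedes it below -/
import Mathlib

section
/- Let Γ be a group acting by homeomorphisms on a locally connected topological space X and let p ∈ X. Then there exists an open neighborhood of p that can be concentrated with control at p if and only if there exists a connected open neighborhood of p that can be concentrated with control at p. (The connected component of p in a neighborhood that concentrates with control itself concentrates with control, using elements γ with γ⁻¹(p) ∈ U ∩ V.) -/
open Pointwise

/-- `U` can be concentrated with control at `p`: for every open neighborhood `V` of `p`
there exists `γ ∈ Γ` with `p ∈ γ(U)`, `γ(U) ⊆ V`, and moreover `p ∈ γ(V)`. -/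
def CanConcentrateWithControl {Γ X : Type*} [Group Γ] [MulAction Γ X] [TopologicalSpace X]
    (U : Set X) (p : X) : Prop :=
  ∀ V : Set X, IsOpen V → p ∈ V → ∃ γ : Γ, p ∈ γ • U ∧ γ • U ⊆ V ∧ p ∈ γ • V

/-- For a group acting by homeomorphisms on a locally connected space, there exists an open
neighborhood of `p` that can be concentrated with control at `p` if and only if there exists
a connected open neighborhood of `p` that can be concentrated with control at `p`. -/
theorem exists_ctrl_concentration_iff_exists_connected
    {Γ X : Type*} [Group Γ] [MulAction Γ X] [TopologicalSpace X] [LocallyConnectedSpace X]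
    (hhomeo : ∀ γ : Γ, Continuous (fun x : X => γ • x))
    (p : X) :
    (∃ U : Set X, IsOpen U ∧ p ∈ U ∧ CanConcentrateWithControl (Γ := Γ) U p) ↔
      (∃ U : Set X, IsOpen U ∧ IsConnected U ∧ p ∈ U ∧
        CanConcentrateWithControl (Γ := Γ) U p) := by
  constructor
  · rintro ⟨U, hUo, hpU, hU⟩
    set C := connectedComponentIn U p with hC
    have hCo : IsOpen C := hUo.connectedComponentIn
    have hpC : p ∈ C := mem_connectedComponentIn hpU
    refine ⟨C, hCo, (isConnected_connectedComponentIn_iff).2 hpU, hpC, ?_⟩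
    intro V hVo hpV
    set W := connectedComponentIn (V ∩ U) p with hW
    have hWo : IsOpen W := (hVo.inter hUo).connectedComponentIn
    have hpW : p ∈ W := mem_connectedComponentIn ⟨hpV, hpU⟩
    obtain ⟨γ, h1, h2, h3⟩ := hU W hWo hpW
    have hWsub : W ⊆ V ∩ U := connectedComponentIn_subset _ _
    refine ⟨γ, ?_, ?_, ?_⟩
    · -- p ∈ γ • C : since γ⁻¹ • p ∈ W ⊆ U connected containing p
      rw [Set.mem_smul_set_iff_inv_smul_mem]
      have hγp : γ⁻¹ • p ∈ W := Set.mem_smul_set_iff_inv_smul_mem.1 h3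
      exact (isPreconnected_connectedComponentIn).subset_connectedComponentIn hpW
        (fun x hx => (hWsub hx).2) hγp
    · exact fun x hx => (hWsub (h2 (Set.smul_set_mono (connectedComponentIn_subset _ _) hx))).1
    · exact Set.smul_set_mono (fun x hx => (hWsub hx).1) h3
  · rintro ⟨U, hUo, _, hpU, hU⟩
    exact ⟨U, hUo, hpU, hU⟩
end

section
/- Let Γ be a Fuchsian group, acting on S¹ by the boundary extensions of its elements, and let p ∈ S¹. Then p is a geodesic separation point of Γ if and only if: there is a neighborhood W of p in S¹ such that whenever q, r ∈ W ∖ {p} are distinct points for which the open arc of S¹ with endpoints q and r that contains p is contained in W, then for every neighborhood V of p there exists γ ∈ Γ such that the open arc with endpoints γ(q) and γ(r) that contains p is contained in V. (Equivalently: whenever the endpoints of a geodesic λ of B² separate p from the boundary of a small neighborhood of p, for each neighborhood V of p some translate γ(λ) has endpoints separating p from the boundary of V.) -/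
noncomputable section

open Complex Metric Filter Set Topology

/-- Elements of SU(1,1): pairs (a,b) of complex numbers with a·ā − b·b̄ = 1.
These parametrize the Möbius transformations z ↦ (az+b)/(b̄z+ā) of the unit disk. -/
@[ext]
structure SU11 : Type where
  a : ℂ
  b : ℂ
  rel : a * (starRingEnd ℂ) a - b * (starRingEnd ℂ) b = 1

namespace SU11

instance : Mul SU11 :=
  ⟨fun x y =>
    ⟨x.a * y.a + x.b * (starRingEnd ℂ) y.b, x.a * y.b + x.b * (starRingEnd ℂ) y.a, by
      have hx := x.rel
      have hy := y.rel
      simp only [map_add, map_mul, Complex.conj_conj]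
      linear_combination (y.a * (starRingEnd ℂ) y.a - y.b * (starRingEnd ℂ) y.b) * hx + hy⟩⟩

instance : One SU11 := ⟨⟨1, 0, by simp⟩⟩

instance : Inv SU11 :=
  ⟨fun x => ⟨(starRingEnd ℂ) x.a, -x.b, by
    have hx := x.rel
    simp only [Complex.conj_conj, map_neg]
    linear_combination hx⟩⟩

@[simp] lemma mul_a (x y : SU11) : (x * y).a = x.a * y.a + x.b * (starRingEnd ℂ) y.b := rfl
@[simp] lemma mul_b (x y : SU11) : (x * y).b = x.a * y.b + x.b * (starRingEnd ℂ) y.a := rfl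
@[simp] lemma one_a : (1 : SU11).a = 1 := rfl
@[simp] lemma one_b : (1 : SU11).b = 0 := rfl
@[simp] lemma inv_a (x : SU11) : (x⁻¹).a = (starRingEnd ℂ) x.a := rfl
@[simp] lemma inv_b (x : SU11) : (x⁻¹).b = -x.b := rfl

instance : Group SU11 where
  mul_assoc x y z := by
    ext <;> simp only [mul_a, mul_b, map_add, map_mul, Complex.conj_conj] <;> ring
  one_mul x := by ext <;> simp
  mul_one x := by ext <;> simp
  inv_mul_cancel x := by
    have hx := x.rel
    ext
    · simp only [mul_a, inv_a, inv_b, one_a, Complex.conj_conj, map_neg]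
      linear_combination hx
    · simp only [mul_b, inv_a, inv_b, one_b, Complex.conj_conj, map_neg]
      ring

/-- The Möbius transformation of the unit disk associated to an element of SU(1,1). -/
def toFun (g : SU11) (z : ℂ) : ℂ :=
  (g.a * z + g.b) / ((starRingEnd ℂ) g.b * z + (starRingEnd ℂ) g.a)

end SU11

/-- The unit circle. -/
def S1 : Set ℂ := Metric.sphere 0 1

/-- The open unit disk (Poincaré disk). -/
def D2 : Set ℂ := Metric.ball 0 1

/-- A Fuchsian group: a discrete subgroup of the Möbius transformations of the disk.
Discreteness is expressed by local finiteness of the orbit of the origin in the disk. -/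
def IsFuchsian (Γ : Subgroup SU11) : Prop :=
  ∀ r : ℝ, r < 1 → {γ : SU11 | γ ∈ Γ ∧ ‖SU11.toFun γ 0‖ ≤ r}.Finite
/-- An open subset of the circle (in its subspace topology). -/
def OpenInS1 (U : Set ℂ) : Prop := U ⊆ S1 ∧ ∃ O : Set ℂ, IsOpen O ∧ U = O ∩ S1

/-- A neighborhood of `p` in the circle. -/
def NbhdInS1 (W : Set ℂ) (p : ℂ) : Prop := W ⊆ S1 ∧ W ∈ nhdsWithin p S1

/-- `U` can be concentrated at `p`: for every (open) neighborhood `V` of `p` in `S¹`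
there is `γ ∈ Γ` with `p ∈ γ(U)` and `γ(U) ⊆ V`. -/
def CanConcentrate (Γ : Subgroup SU11) (U : Set ℂ) (p : ℂ) : Prop :=
  ∀ V : Set ℂ, OpenInS1 V → p ∈ V →
    ∃ γ ∈ Γ, p ∈ SU11.toFun γ '' U ∧ SU11.toFun γ '' U ⊆ V

/-- `U` can be concentrated with control at `p`: moreover `γ` can be chosen with `p ∈ γ(V)`. -/
def CanConcentrateCtrl (Γ : Subgroup SU11) (U : Set ℂ) (p : ℂ) : Prop :=
  ∀ V : Set ℂ, OpenInS1 V → p ∈ V →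
    ∃ γ ∈ Γ, p ∈ SU11.toFun γ '' U ∧ SU11.toFun γ '' U ⊆ V ∧ p ∈ SU11.toFun γ '' V

/-- `p` is a controlled concentration point for `Γ`. -/
def ControlledConcPt (Γ : Subgroup SU11) (p : ℂ) : Prop :=
  ∃ U : Set ℂ, OpenInS1 U ∧ p ∈ U ∧ CanConcentrateCtrl Γ U p

/-- `p` is a concentration point for `Γ`: every sufficiently small connected open
neighborhood of `p` can be concentrated at `p`. -/
def ConcPt (Γ : Subgroup SU11) (p : ℂ) : Prop :=
  ∃ W : Set ℂ, NbhdInS1 W p ∧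
    ∀ U : Set ℂ, OpenInS1 U → IsPreconnected U → p ∈ U → U ⊆ W → CanConcentrate Γ U p

/-- `p` is a geodesic separation point for `Γ`: for every sufficiently small connected
open neighborhood `U` of `p`, either `U` or `S¹ ∖ closure U` can be concentrated at `p`. -/
def GeodSepPt (Γ : Subgroup SU11) (p : ℂ) : Prop :=
  ∃ W : Set ℂ, NbhdInS1 W p ∧
    ∀ U : Set ℂ, OpenInS1 U → IsPreconnected U → p ∈ U → U ⊆ W →
      (CanConcentrate Γ U p ∨ CanConcentrate Γ (S1 \ closure U) p)

/-- `p` is a weak concentration point for `Γ`: some nonempty connected open subset of the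
circle can be concentrated at `p`. -/
def WeakConcPt (Γ : Subgroup SU11) (p : ℂ) : Prop :=
  ∃ U : Set ℂ, OpenInS1 U ∧ U.Nonempty ∧ IsPreconnected U ∧ CanConcentrate Γ U p

/-- The orbit of the origin under `Γ`. -/
def orbitZero (Γ : Subgroup SU11) : Set ℂ := {z : ℂ | ∃ γ ∈ Γ, SU11.toFun γ 0 = z}

/-- `p` is a limit point of `Γ`: an accumulation point on `S¹` of the orbit of `0`. -/
def LimitPoint (Γ : Subgroup SU11) (p : ℂ) : Prop :=
  p ∈ S1 ∧ p ∈ closure (orbitZero Γ)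

/-- Hyperbolic cosine of the Poincaré distance between two points of the disk. -/
def hCosh (z w : ℂ) : ℝ :=
  1 + 2 * Complex.normSq (z - w) / ((1 - Complex.normSq z) * (1 - Complex.normSq w))

/-- The Poincaré (hyperbolic) distance on the unit disk. -/
def hDist (z w : ℂ) : ℝ := Real.log (hCosh z w + Real.sqrt (hCosh z w ^ 2 - 1))

/-- `p ∈ S¹` is a conical limit point of `Γ`: some sequence of distinct elements moves the
origin to `p` while staying within a bounded hyperbolic distance of the geodesic ray
(the Euclidean radius) from `0` to `p`. -/
def ConicalLimitPt (Γ : Subgroup SU11) (p : ℂ) : Prop :=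
  ∃ C : ℝ, 0 < C ∧ ∃ γs : ℕ → SU11, (∀ n, γs n ∈ Γ) ∧ Function.Injective γs ∧
    Filter.Tendsto (fun n => SU11.toFun (γs n) 0) Filter.atTop (nhds p) ∧
    ∀ n, ∃ t : ℝ, 0 ≤ t ∧ t < 1 ∧ hDist (SU11.toFun (γs n) 0) ((t : ℂ) * p) ≤ C

/-- A parabolic element: a non-identity element with exactly one fixed point in the
closed disk. -/
def IsParabolic (g : SU11) : Prop :=
  g ≠ 1 ∧ ∃! z : ℂ, ‖z‖ ≤ 1 ∧ SU11.toFun g z = z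

/-- `p` is a parabolic fixed point of `Γ`. -/
def ParabolicFixedPt (Γ : Subgroup SU11) (p : ℂ) : Prop :=
  ∃ γ ∈ Γ, IsParabolic γ ∧ SU11.toFun γ p = p

/-- A hyperbolic element: a non-identity element fixing two distinct points of `S¹`. -/
def IsHyperbolicEl (g : SU11) : Prop :=
  g ≠ 1 ∧ ∃ z w : ℂ, z ≠ w ∧ z ∈ S1 ∧ w ∈ S1 ∧ SU11.toFun g z = z ∧ SU11.toFun g w = w

/-- A torsionfree subgroup. -/
def IsTorsionFreeSubgroup (Γ : Subgroup SU11) : Prop :=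
  ∀ γ ∈ Γ, γ ≠ 1 → ∀ n : ℕ, 0 < n → γ ^ n ≠ 1

/-- A (unit-speed) geodesic ray in the Poincaré disk, parameterized on `[0,∞)`. -/
def IsGeodesicRay (α : ℝ → ℂ) : Prop :=
  (∀ t : ℝ, 0 ≤ t → α t ∈ D2) ∧ ∀ s t : ℝ, 0 ≤ s → 0 ≤ t → hDist (α s) (α t) = |s - t|

/-- A complete geodesic of the Poincaré disk, as a subset. -/
def IsCompleteGeodesic (L : Set ℂ) : Prop :=
  ∃ c : ℝ → ℂ, (∀ t, c t ∈ D2) ∧ (∀ s t : ℝ, hDist (c s) (c t) = |s - t|) ∧ L = Set.range c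

/-- `p ∈ S¹` is an endpoint of the complete geodesic `L`. -/
def IsEndpointOf (p : ℂ) (L : Set ℂ) : Prop :=
  ∃ c : ℝ → ℂ, (∀ t, c t ∈ D2) ∧ (∀ s t : ℝ, hDist (c s) (c t) = |s - t|) ∧
    L = Set.range c ∧ Filter.Tendsto c Filter.atTop (nhds p)

namespace ArcAux

lemma mem_S1_iff {z : ℂ} : z ∈ S1 ↔ ‖z‖ = 1 := by
  simp [S1, Complex.dist_eq]

lemma S1_ne_zero {w : ℂ} (hw : w ∈ S1) : w ≠ 0 := by
  rw [mem_S1_iff] at hw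
  intro h; simp [h] at hw

noncomputable def cir (w : ℂ) (t : ℝ) : ℂ := w * Complex.exp (t * Complex.I)

lemma continuous_cir (w : ℂ) : Continuous (cir w) := by
  unfold cir; fun_prop

lemma cir_mem {w : ℂ} (hw : w ∈ S1) (t : ℝ) : cir w t ∈ S1 := by
  rw [mem_S1_iff] at *
  rw [cir, norm_mul, hw, Complex.norm_exp_ofReal_mul_I, one_mul]

lemma cir_zero (w : ℂ) : cir w 0 = w := by simp [cir]

lemma cir_two_pi (w : ℂ) : cir w (2 * Real.pi) = w := by
  rw [cir]
  push_cast
  rw [Complex.exp_two_pi_mul_I, mul_one]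

lemma cir_eq_cir_iff {w : ℂ} (hw : w ≠ 0) {t t' : ℝ} :
    cir w t = cir w t' ↔ ∃ n : ℤ, t = t' + n * (2 * Real.pi) := by
  unfold cir
  rw [mul_right_inj' hw, Complex.exp_eq_exp_iff_exists_int]
  constructor
  · rintro ⟨n, h⟩
    refine ⟨n, ?_⟩
    have h2 : ((t : ℂ)) * I = ((t' + n * (2*Real.pi) : ℝ) : ℂ) * I := by
      push_cast
      linear_combination h
    have := mul_right_cancel₀ Complex.I_ne_zero h2
    exact_mod_cast this
  · rintro ⟨n, rfl⟩
    refine ⟨n, ?_⟩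
    push_cast
    ring

lemma cir_ne_of_window {w : ℂ} (hw : w ∈ S1) {t t' : ℝ} (hne : t ≠ t')
    (hwin : |t - t'| < 2 * Real.pi) : cir w t ≠ cir w t' := by
  intro h
  obtain ⟨n, hn⟩ := (cir_eq_cir_iff (S1_ne_zero hw)).mp h
  have h2 : t - t' = n * (2 * Real.pi) := by linarith
  have hn0 : n = 0 := by
    by_contra hn0
    have h1 : (1:ℝ) ≤ |(n:ℝ)| := by
      have := Int.one_le_abs (by omega : n ≠ 0)
      exact_mod_cast this
    have h3 : 2 * Real.pi ≤ |t - t'| := by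
      rw [h2, abs_mul, abs_of_pos Real.two_pi_pos]
      nlinarith [Real.two_pi_pos]
    linarith
  apply hne
  rw [hn, hn0]
  push_cast
  ring

noncomputable def garg (w z : ℂ) : ℝ := (-(z / w)).arg + Real.pi

lemma abs_neg_div {w z : ℂ} (hw : w ∈ S1) (hz : z ∈ S1) : ‖-(z / w)‖ = 1 := by
  rw [mem_S1_iff] at hw hz
  rw [norm_neg, norm_div, hw, hz]
  norm_num

lemma exp_garg {w z : ℂ} (hw : w ∈ S1) (hz : z ∈ S1) : cir w (garg w z) = z := by
  have hu : ‖-(z / w)‖ = 1 := abs_neg_div hw hz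
  have key : Complex.exp ((((-(z / w)).arg : ℝ) : ℂ) * I) = -(z / w) := by
    have := Complex.norm_mul_exp_arg_mul_I (-(z / w))
    rwa [hu, Complex.ofReal_one, one_mul] at this
  rw [cir, garg]
  push_cast
  rw [add_mul, Complex.exp_add, key, Complex.exp_pi_mul_I]
  field_simp [S1_ne_zero hw]

lemma garg_mem {w z : ℂ} (hw : w ∈ S1) (hz : z ∈ S1) (hzw : z ≠ w) :
    garg w z ∈ Set.Ioo 0 (2 * Real.pi) := by
  have h1 := Complex.arg_mem_Ioc (-(z / w))
  have hu : ‖-(z / w)‖ = 1 := abs_neg_div hw hz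
  constructor
  · have := h1.1
    unfold garg
    linarith
  · rcases lt_or_eq_of_le h1.2 with h | h
    · unfold garg; linarith [Real.pi_pos]
    · exfalso
      have : -(z / w) = -1 := by
        have := Complex.norm_mul_exp_arg_mul_I (-(z / w))
        rw [hu, Complex.ofReal_one, one_mul, h, Complex.exp_pi_mul_I] at this
        exact this.symm
      apply hzw
      have hw0 := S1_ne_zero hw
      field_simp at this
      exact neg_inj.mp this

lemma garg_cir {w : ℂ} (hw : w ∈ S1) {t : ℝ} (ht : t ∈ Set.Ioo 0 (2 * Real.pi)) :
    garg w (cir w t) = t := by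
  have hmem : cir w t ∈ S1 := cir_mem hw t
  have hne : cir w t ≠ w := by
    have := cir_ne_of_window hw (t' := 0) (ne_of_gt ht.1) ?_
    · rwa [cir_zero] at this
    · rw [sub_zero, abs_of_pos ht.1]; exact ht.2
  have h1 : cir w (garg w (cir w t)) = cir w t := exp_garg hw hmem
  have h2 := garg_mem hw hmem hne
  by_contra hne2
  exact cir_ne_of_window hw hne2 (by
    rw [abs_sub_lt_iff]
    constructor <;> nlinarith [h2.1, h2.2, ht.1, ht.2]) h1

lemma garg_continuousOn {w : ℂ} (hw : w ∈ S1) : ContinuousOn (garg w) (S1 \ {w}) := by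
  intro z hz
  apply ContinuousAt.continuousWithinAt
  apply ContinuousAt.add _ continuousAt_const
  have hu : ‖-(z / w)‖ = 1 := abs_neg_div hw hz.1
  have hslit : -(z / w) ∈ Complex.slitPlane := by
    rw [Complex.mem_slitPlane_iff]
    by_contra hc
    push_neg at hc
    obtain ⟨hre, him⟩ := hc
    have hval : -(z / w) = -1 := by
      have h1 : -(z / w) = ((-(z / w)).re : ℂ) := by
        apply Complex.ext <;> simp [him]
      have h2 : |((-(z / w)).re)| = 1 := by
        have := (Complex.norm_real ((-(z / w)).re)).trans (Real.norm_eq_abs _)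
        rw [← h1, hu] at this
        exact this.symm
      rw [h1]
      rcases abs_cases ((-(z / w)).re) with ⟨h3, _⟩ | ⟨h3, _⟩ <;> rw [h2] at h3
      · exfalso; rw [Complex.neg_re] at h3 hre; linarith
      · rw [show ((-(z / w)).re) = -1 by linarith]
        norm_num
    exfalso
    apply hz.2
    have hw0 := S1_ne_zero hw
    field_simp at hval
    simpa using hval
  have harg : ContinuousAt Complex.arg (-(z / w)) := Complex.continuousAt_arg hslit
  have hcont : ContinuousAt (fun x : ℂ => -(x / w)) z := by fun_prop
  exact ContinuousAt.comp (g := Complex.arg) (f := fun x : ℂ => -(x / w)) (x := z) harg hcont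

lemma exists_rep {w : ℂ} (hw : w ∈ S1) {z : ℂ} (hz : z ∈ S1) (c : ℝ) :
    ∃ t ∈ Set.Ico c (c + 2 * Real.pi), cir w t = z := by
  set t0 := garg w z with ht0
  have h0 : cir w t0 = z := exp_garg hw hz
  refine ⟨toIcoMod Real.two_pi_pos c t0, toIcoMod_mem_Ico _ _ _, ?_⟩
  rw [← h0]
  apply (cir_eq_cir_iff (S1_ne_zero hw)).mpr
  refine ⟨-(toIcoDiv Real.two_pi_pos c t0), ?_⟩
  rw [toIcoMod, zsmul_eq_mul]
  push_cast
  ring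

lemma partition {w : ℂ} (hw : w ∈ S1) {s1 s2 : ℝ} (h12 : s1 < s2) (h2 : s2 < s1 + 2 * Real.pi)
    {z : ℂ} (hz : z ∈ S1) :
    z = cir w s1 ∨ z = cir w s2 ∨ z ∈ cir w '' Set.Ioo s1 s2 ∨
      z ∈ cir w '' Set.Ioo s2 (s1 + 2 * Real.pi) := by
  obtain ⟨t, ht, rfl⟩ := exists_rep hw hz s1
  rcases eq_or_lt_of_le ht.1 with h | h
  · exact Or.inl (by rw [← h])
  rcases lt_trichotomy t s2 with h' | h' | h'
  · exact Or.inr (Or.inr (Or.inl ⟨t, ⟨h, h'⟩, rfl⟩))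
  · exact Or.inr (Or.inl (by rw [h']))
  · exact Or.inr (Or.inr (Or.inr ⟨t, ⟨h', ht.2⟩, rfl⟩))

lemma cir_ne_of_between {w : ℂ} (hw : w ∈ S1) {t t' : ℝ} (h : t < t')
    (h2 : t' - t < 2 * Real.pi) : cir w t ≠ cir w t' :=
  cir_ne_of_window hw (ne_of_lt h) (by rw [abs_sub_lt_iff]; constructor <;> linarith)

lemma arc_subset_S1 {w : ℂ} (hw : w ∈ S1) (s : Set ℝ) : cir w '' s ⊆ S1 := by
  rintro z ⟨t, _, rfl⟩; exact cir_mem hw t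

lemma arc_preconn (w : ℂ) (s1 s2 : ℝ) : IsPreconnected (cir w '' Set.Ioo s1 s2) :=
  isPreconnected_Ioo.image _ (continuous_cir w).continuousOn

lemma closure_arc {w : ℂ} {s1 s2 : ℝ} (h : s1 < s2) :
    closure (cir w '' Set.Ioo s1 s2) = cir w '' Set.Icc s1 s2 := by
  apply Set.Subset.antisymm
  · exact closure_minimal (Set.image_mono Set.Ioo_subset_Icc_self)
      (isCompact_Icc.image (continuous_cir w)).isClosed
  · rw [← closure_Ioo (ne_of_lt h)]
    exact image_closure_subset_closure_image (continuous_cir w)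

/-- Points of the open arc differ from points of the complementary closed arc. -/
lemma arc_disj {w : ℂ} (hw : w ∈ S1) {s1 s2 : ℝ} (h2 : s2 ≤ s1 + 2 * Real.pi)
    {t t' : ℝ} (ht : t ∈ Set.Ioo s1 s2) (ht' : t' ∈ Set.Icc s2 (s1 + 2 * Real.pi)) :
    cir w t ≠ cir w t' :=
  cir_ne_of_between hw (lt_of_lt_of_le ht.2 ht'.1) (by
    have := ht.1; have := ht'.2; linarith)

/-- Points of the second open arc differ from points of the first closed arc. -/
lemma arc_disj' {w : ℂ} (hw : w ∈ S1) {s1 s2 : ℝ} (h12 : s1 ≤ s2)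
    {t t' : ℝ} (ht : t ∈ Set.Ioo s2 (s1 + 2 * Real.pi)) (ht' : t' ∈ Set.Icc s1 s2) :
    cir w t ≠ cir w t' :=
  (cir_ne_of_between hw (lt_of_le_of_lt ht'.2 ht.1) (by
    have := ht.2; have := ht'.1; linarith)).symm

lemma endpoint_not_mem {w : ℂ} (hw : w ∈ S1) {s1 s2 : ℝ} (h2 : s2 ≤ s1 + 2 * Real.pi) :
    cir w s1 ∉ cir w '' Set.Ioo s1 s2 ∧ cir w s2 ∉ cir w '' Set.Ioo s1 s2 := by
  constructor <;> rintro ⟨t, ht, hteq⟩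
  · exact cir_ne_of_between hw ht.1 (by have := ht.2; linarith) hteq.symm
  · exact cir_ne_of_between hw ht.2 (by have := ht.1; linarith) hteq

lemma arc_open {w : ℂ} (hw : w ∈ S1) {s1 s2 : ℝ} (h12 : s1 < s2) (h2 : s2 < s1 + 2 * Real.pi) :
    OpenInS1 (cir w '' Set.Ioo s1 s2) := by
  refine ⟨arc_subset_S1 hw _, (cir w '' Set.Icc s2 (s1 + 2 * Real.pi))ᶜ,
    (isCompact_Icc.image (continuous_cir w)).isClosed.isOpen_compl, ?_⟩
  apply Set.Subset.antisymm
  · rintro z ⟨t, ht, rfl⟩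
    refine ⟨?_, cir_mem hw t⟩
    rintro ⟨t', ht', hteq⟩
    exact arc_disj hw h2.le ht ht' hteq.symm
  · rintro z ⟨hzK, hzS⟩
    rcases partition hw h12 h2 hzS with h | h | h | h
    · exfalso
      apply hzK
      refine ⟨s1 + 2 * Real.pi, ⟨by linarith, le_refl _⟩, ?_⟩
      rw [h]
      exact ((cir_eq_cir_iff (S1_ne_zero hw)).mpr ⟨-1, by push_cast; ring⟩).symm
    · exact absurd ⟨s2, ⟨le_refl _, by linarith⟩, h.symm⟩ hzK
    · exact h
    · obtain ⟨t, ht, rfl⟩ := h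
      exact absurd ⟨t, ⟨ht.1.le, ht.2.le⟩, rfl⟩ hzK

lemma S1_diff_closure {w : ℂ} (hw : w ∈ S1) {s1 s2 : ℝ} (h12 : s1 < s2)
    (h2 : s2 < s1 + 2 * Real.pi) :
    S1 \ closure (cir w '' Set.Ioo s1 s2) = cir w '' Set.Ioo s2 (s1 + 2 * Real.pi) := by
  rw [closure_arc h12]
  apply Set.Subset.antisymm
  · rintro z ⟨hzS, hzK⟩
    rcases partition hw h12 h2 hzS with h | h | h | h
    · exact absurd ⟨s1, ⟨le_refl _, h12.le⟩, h.symm⟩ hzK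
    · exact absurd ⟨s2, ⟨h12.le, le_refl _⟩, h.symm⟩ hzK
    · obtain ⟨t, ht, rfl⟩ := h
      exact absurd ⟨t, ⟨ht.1.le, ht.2.le⟩, rfl⟩ hzK
    · exact h
  · rintro z ⟨t, ht, rfl⟩
    refine ⟨cir_mem hw t, ?_⟩
    rintro ⟨t', ht', hteq⟩
    exact arc_disj' hw h12.le ht ht' hteq.symm

lemma comp_eq_arc {w : ℂ} (hw : w ∈ S1) {s1 s2 t : ℝ} (h12 : s1 < s2)
    (h2 : s2 < s1 + 2 * Real.pi) (ht : t ∈ Set.Ioo s1 s2) :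
    connectedComponentIn (S1 \ {cir w s1, cir w s2}) (cir w t) = cir w '' Set.Ioo s1 s2 := by
  have harc_sub : cir w '' Set.Ioo s1 s2 ⊆ S1 \ {cir w s1, cir w s2} := by
    rintro z ⟨t', ht', rfl⟩
    refine ⟨cir_mem hw t', ?_⟩
    rintro (h | h)
    · exact cir_ne_of_between hw ht'.1 (by have := ht'.2; linarith) h.symm
    · exact cir_ne_of_between hw ht'.2 (by have := ht'.1; linarith) h
  apply Set.Subset.antisymm
  · -- component is contained in the arc
    set C := connectedComponentIn (S1 \ {cir w s1, cir w s2}) (cir w t) with hC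
    have hCsub : C ⊆ S1 \ {cir w s1, cir w s2} := connectedComponentIn_subset _ _
    have hCpre : IsPreconnected C := isPreconnected_connectedComponentIn
    set u := (cir w '' Set.Icc s2 (s1 + 2 * Real.pi))ᶜ with hu
    set v := (cir w '' Set.Icc s1 s2)ᶜ with hv
    have huop : IsOpen u := (isCompact_Icc.image (continuous_cir w)).isClosed.isOpen_compl
    have hvop : IsOpen v := (isCompact_Icc.image (continuous_cir w)).isClosed.isOpen_compl
    have hcover : C ⊆ u ∪ v := by
      intro z hz
      obtain ⟨hzS, hz2⟩ := hCsub hz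
      have hz2' : z ≠ cir w s1 ∧ z ≠ cir w s2 := by simpa [not_or] using hz2
      rcases partition hw h12 h2 hzS with h | h | h | h
      · exact absurd h hz2'.1
      · exact absurd h hz2'.2
      · left
        obtain ⟨t', ht', rfl⟩ := h
        rintro ⟨t'', ht'', hteq⟩
        exact arc_disj hw h2.le ht' ht'' hteq.symm
      · right
        obtain ⟨t', ht', rfl⟩ := h
        rintro ⟨t'', ht'', hteq⟩
        exact arc_disj' hw h12.le ht' ht'' hteq.symm
    have hdisj : C ∩ (u ∩ v) = ∅ := by
      apply Set.eq_empty_iff_forall_notMem.mpr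
      rintro z ⟨hzC, hzu, hzv⟩
      obtain ⟨hzS, _⟩ := hCsub hzC
      rcases partition hw h12 h2 hzS with h | h | h | h
      · exact hzv ⟨s1, ⟨le_refl _, h12.le⟩, h.symm⟩
      · exact hzv ⟨s2, ⟨h12.le, le_refl _⟩, h.symm⟩
      · obtain ⟨t', ht', rfl⟩ := h
        exact hzv ⟨t', ⟨ht'.1.le, ht'.2.le⟩, rfl⟩
      · obtain ⟨t', ht', rfl⟩ := h
        exact hzu ⟨t', ⟨ht'.1.le, ht'.2.le⟩, rfl⟩
    have hCu : (C ∩ u).Nonempty := by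
      refine ⟨cir w t, mem_connectedComponentIn (harc_sub ⟨t, ht, rfl⟩), ?_⟩
      rintro ⟨t'', ht'', hteq⟩
      exact arc_disj hw h2.le ht ht'' hteq.symm
    have hCv : C ∩ v = ∅ := by
      by_contra hne
      obtain ⟨z, hz⟩ := Set.nonempty_iff_ne_empty.mpr hne
      have := hCpre u v huop hvop hcover hCu ⟨z, hz⟩
      obtain ⟨y, hy⟩ := this
      rw [Set.eq_empty_iff_forall_notMem] at hdisj
      exact hdisj y ⟨hy.1, hy.2⟩
    intro z hzC
    obtain ⟨hzS, hz2⟩ := hCsub hzC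
    have hz2' : z ≠ cir w s1 ∧ z ≠ cir w s2 := by simpa [not_or] using hz2
    rcases partition hw h12 h2 hzS with h | h | h | h
    · exact absurd h hz2'.1
    · exact absurd h hz2'.2
    · exact h
    · exfalso
      rw [Set.eq_empty_iff_forall_notMem] at hCv
      apply hCv z
      refine ⟨hzC, ?_⟩
      obtain ⟨t', ht', rfl⟩ := h
      rintro ⟨t'', ht'', hteq⟩
      exact arc_disj' hw h12.le ht' ht'' hteq.symm
  · exact (arc_preconn w s1 s2).subset_connectedComponentIn ⟨t, ht, rfl⟩ harc_sub

lemma normSq_rel (g : SU11) : Complex.normSq g.a - Complex.normSq g.b = 1 := by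
  have h := g.rel
  rw [Complex.mul_conj, Complex.mul_conj] at h
  exact_mod_cast h

lemma den_ne_zero (g : SU11) {z : ℂ} (hz : ‖z‖ ≤ 1) :
    (starRingEnd ℂ) g.b * z + (starRingEnd ℂ) g.a ≠ 0 := by
  intro h
  have hab : ‖g.b‖ < ‖g.a‖ := by
    have h1 := normSq_rel g
    rw [Complex.normSq_eq_norm_sq, Complex.normSq_eq_norm_sq] at h1
    nlinarith [norm_nonneg g.a, norm_nonneg g.b]
  have h2 : (starRingEnd ℂ) g.a = -((starRingEnd ℂ) g.b * z) := by linear_combination h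
  have h3 : ‖g.a‖ = ‖g.b‖ * ‖z‖ := by
    have := congrArg (fun x : ℂ => ‖x‖) h2
    simpa [norm_mul] using this
  nlinarith [norm_nonneg g.b]

lemma key_normSq (g : SU11) (z : ℂ) :
    Complex.normSq (g.a * z + g.b) - Complex.normSq ((starRingEnd ℂ) g.b * z + (starRingEnd ℂ) g.a)
      = Complex.normSq z - 1 := by
  have h1 := Complex.mul_conj (g.a * z + g.b)
  have h2 := Complex.mul_conj ((starRingEnd ℂ) g.b * z + (starRingEnd ℂ) g.a)
  have h3 := Complex.mul_conj z
  have key : (g.a * z + g.b) * (starRingEnd ℂ) (g.a * z + g.b) -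
      ((starRingEnd ℂ) g.b * z + (starRingEnd ℂ) g.a) *
        (starRingEnd ℂ) ((starRingEnd ℂ) g.b * z + (starRingEnd ℂ) g.a)
      = (g.a * (starRingEnd ℂ) g.a - g.b * (starRingEnd ℂ) g.b) * (z * (starRingEnd ℂ) z - 1) := by
    simp only [map_add, map_mul, Complex.conj_conj]
    ring
  rw [h1, h2, g.rel, h3] at key
  have : ((Complex.normSq (g.a * z + g.b) : ℂ)) -
      ((Complex.normSq ((starRingEnd ℂ) g.b * z + (starRingEnd ℂ) g.a) : ℂ))
      = ((Complex.normSq z : ℂ)) - 1 := by rw [key]; ring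
  exact_mod_cast this

lemma toFun_mem_S1 (g : SU11) {z : ℂ} (hz : z ∈ S1) : SU11.toFun g z ∈ S1 := by
  rw [mem_S1_iff] at hz ⊢
  have hd := den_ne_zero g hz.le
  have hk := key_normSq g z
  have hz2 : Complex.normSq z = 1 := by
    rw [Complex.normSq_eq_norm_sq, hz]; norm_num
  rw [hz2, sub_self] at hk
  rw [SU11.toFun, norm_div]
  rw [div_eq_one_iff_eq (by simpa using hd)]
  have := sub_eq_zero.mp hk
  rw [Complex.normSq_eq_norm_sq, Complex.normSq_eq_norm_sq] at this
  nlinarith [norm_nonneg (g.a * z + g.b),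
    norm_nonneg ((starRingEnd ℂ) g.b * z + (starRingEnd ℂ) g.a)]

lemma toFun_left_inv (g : SU11) {z : ℂ} (hz : z ∈ S1) :
    SU11.toFun g⁻¹ (SU11.toFun g z) = z := by
  have hz1 : ‖z‖ ≤ 1 := (mem_S1_iff.mp hz).le
  have hd : (starRingEnd ℂ) g.b * z + (starRingEnd ℂ) g.a ≠ 0 := den_ne_zero g hz1
  set D := (starRingEnd ℂ) g.b * z + (starRingEnd ℂ) g.a with hD
  set N := g.a * z + g.b with hN
  have hd2 : (starRingEnd ℂ) (g⁻¹).b * (N / D) + (starRingEnd ℂ) (g⁻¹).a ≠ 0 := by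
    have habs : ‖N / D‖ ≤ 1 := by
      have := toFun_mem_S1 g hz
      rw [mem_S1_iff] at this
      exact this.le
    exact den_ne_zero g⁻¹ habs
  rw [SU11.toFun]
  show (((g⁻¹).a * (N / D) + (g⁻¹).b) / ((starRingEnd ℂ) (g⁻¹).b * (N / D) + (starRingEnd ℂ) (g⁻¹).a)) = z
  simp only [SU11.inv_a, SU11.inv_b, map_neg, Complex.conj_conj] at hd2 ⊢
  have hu : N / D * D = N := div_mul_cancel₀ N hd
  rw [div_eq_iff hd2]
  linear_combination hu

lemma toFun_continuousOn (g : SU11) : ContinuousOn (SU11.toFun g) S1 := by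
  apply ContinuousOn.div
  · fun_prop
  · fun_prop
  · intro z hz
    exact den_ne_zero g (mem_S1_iff.mp hz).le

lemma toFun_right_inv (g : SU11) {z : ℂ} (hz : z ∈ S1) :
    SU11.toFun g (SU11.toFun g⁻¹ z) = z := by
  have := toFun_left_inv g⁻¹ hz
  rwa [inv_inv] at this

lemma toFun_inj (g : SU11) {z z' : ℂ} (hz : z ∈ S1) (hz' : z' ∈ S1)
    (h : SU11.toFun g z = SU11.toFun g z') : z = z' := by
  have h1 := toFun_left_inv g hz
  have h2 := toFun_left_inv g hz'
  rw [← h1, ← h2, h]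

lemma open_preconn_eq_Ioo {T : Set ℝ} (hO : IsOpen T) (hP : IsPreconnected T)
    {l u x : ℝ} (hx : x ∈ T) (hsub : T ⊆ Set.Ioo l u) :
    ∃ a b : ℝ, l ≤ a ∧ a < x ∧ x < b ∧ b ≤ u ∧ T = Set.Ioo a b := by
  have hne : T.Nonempty := ⟨x, hx⟩
  have hbdd : BddBelow T := ⟨l, fun y hy => (hsub hy).1.le⟩
  have hbdd2 : BddAbove T := ⟨u, fun y hy => (hsub hy).2.le⟩
  have hord : T.OrdConnected := isPreconnected_iff_ordConnected.mp hP
  have hstrict : ∀ y ∈ T, sInf T < y ∧ y < sSup T := by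
    intro y hy
    obtain ⟨ε, hε, hball⟩ := Metric.isOpen_iff.mp hO y hy
    have hy1 : y - ε / 2 ∈ T := hball (by
      rw [Metric.mem_ball, Real.dist_eq]
      rw [_root_.abs_of_nonpos (by linarith : y - ε / 2 - y ≤ 0)]
      linarith)
    have hy2 : y + ε / 2 ∈ T := hball (by
      rw [Metric.mem_ball, Real.dist_eq, show y + ε / 2 - y = ε / 2 by ring,
        _root_.abs_of_nonneg (by positivity : (0:ℝ) ≤ ε / 2)]
      linarith)
    constructor
    · exact lt_of_le_of_lt (csInf_le hbdd hy1) (by linarith)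
    · exact lt_of_lt_of_le (by linarith : y < y + ε / 2) (le_csSup hbdd2 hy2)
  refine ⟨sInf T, sSup T, ?_, (hstrict x hx).1, (hstrict x hx).2, ?_, ?_⟩
  · exact le_csInf hne fun y hy => (hsub hy).1.le
  · exact csSup_le hne fun y hy => (hsub hy).2.le
  · apply Set.Subset.antisymm
    · exact fun y hy => ⟨(hstrict y hy).1, (hstrict y hy).2⟩
    · rintro y ⟨hy1, hy2⟩
      obtain ⟨c, hc, hcy⟩ := exists_lt_of_csInf_lt hne hy1
      obtain ⟨d, hd, hyd⟩ := exists_lt_of_lt_csSup hne hy2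
      exact hord.out hc hd ⟨hcy.le, hyd.le⟩

lemma openInS1_nbhd {U : Set ℂ} {p : ℂ} (hU : OpenInS1 U) (hp : p ∈ U) : NbhdInS1 U p := by
  obtain ⟨hUS, O, hO, hUO⟩ := hU
  refine ⟨hUS, ?_⟩
  rw [mem_nhdsWithin]
  exact ⟨O, hO, by rw [hUO] at hp; exact hp.1, by rw [hUO]⟩

lemma nbhd_shrink {V : Set ℂ} {p : ℂ} (hV : NbhdInS1 V p) (hp : p ∈ S1) :
    ∃ V0 : Set ℂ, OpenInS1 V0 ∧ p ∈ V0 ∧ V0 ⊆ V := by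
  obtain ⟨hVS, hmem⟩ := hV
  rw [mem_nhdsWithin] at hmem
  obtain ⟨O, hO, hpO, hsub⟩ := hmem
  exact ⟨O ∩ S1, ⟨Set.inter_subset_right, O, hO, rfl⟩, ⟨hpO, hp⟩, hsub⟩

lemma openInS1_inter {U V : Set ℂ} (hU : OpenInS1 U) (hV : OpenInS1 V) :
    OpenInS1 (U ∩ V) := by
  obtain ⟨hUS, O1, hO1, hU1⟩ := hU
  obtain ⟨hVS, O2, hO2, hV1⟩ := hV
  refine ⟨fun z hz => hUS hz.1, O1 ∩ O2, hO1.inter hO2, ?_⟩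
  rw [hU1, hV1]
  ext z
  constructor
  · rintro ⟨⟨h1, h2⟩, h3, h4⟩; exact ⟨⟨h1, h3⟩, h2⟩
  · rintro ⟨⟨h1, h3⟩, h2⟩; exact ⟨⟨h1, h2⟩, ⟨h3, h2⟩⟩

lemma cir_add_two_pi (w : ℂ) (t : ℝ) : cir w (t + 2 * Real.pi) = cir w t := by
  unfold cir
  push_cast
  rw [add_mul, Complex.exp_add]
  rw [show (2:ℂ) * Real.pi * Complex.I = 2 * Real.pi * Complex.I by push_cast; ring]
  rw [Complex.exp_two_pi_mul_I, mul_one]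

lemma workhorse (γ : SU11) {w : ℂ} (hw : w ∈ S1) {s1 s2 : ℝ}
    (h12 : s1 < s2) (h2 : s2 < s1 + 2 * Real.pi) {p q r : ℂ} (hp : p ∈ S1)
    (hq : q ∈ S1) (hr : r ∈ S1)
    (hqr : ({q, r} : Set ℂ) = {cir w s1, cir w s2}) {V : Set ℂ}
    (hpU : p ∈ SU11.toFun γ '' (cir w '' Set.Ioo s1 s2))
    (hUV : SU11.toFun γ '' (cir w '' Set.Ioo s1 s2) ⊆ V) :
    p ≠ SU11.toFun γ q ∧ p ≠ SU11.toFun γ r ∧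
      connectedComponentIn (S1 \ {SU11.toFun γ q, SU11.toFun γ r}) p ⊆ V := by
  have hUS : cir w '' Set.Ioo s1 s2 ⊆ S1 := arc_subset_S1 hw _
  obtain ⟨x, hxU, hxp⟩ := hpU
  have hxS : x ∈ S1 := hUS hxU
  have hendpt : ∀ c ∈ ({q, r} : Set ℂ), c ∉ cir w '' Set.Ioo s1 s2 := by
    intro c hc
    rw [hqr] at hc
    simp only [Set.mem_insert_iff, Set.mem_singleton_iff] at hc
    rcases hc with hc | hc <;> rw [hc]
    · exact (endpoint_not_mem hw h2.le).1
    · exact (endpoint_not_mem hw h2.le).2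
  have hne : ∀ c, c ∈ S1 → c ∉ cir w '' Set.Ioo s1 s2 → p ≠ SU11.toFun γ c := by
    intro c hcS hcU h
    apply hcU
    have : x = c := toFun_inj γ hxS hcS (by rw [hxp, h])
    rwa [← this]
  have hne1 : p ≠ SU11.toFun γ q := hne q hq (hendpt q (Set.mem_insert _ _))
  have hne2 : p ≠ SU11.toFun γ r :=
    hne r hr (hendpt r (Set.mem_insert_of_mem _ (Set.mem_singleton _)))
  refine ⟨hne1, hne2, ?_⟩
  have hpS : p ∈ S1 := hp
  have hpF : p ∈ S1 \ {SU11.toFun γ q, SU11.toFun γ r} := by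
    refine ⟨hpS, ?_⟩
    simp only [Set.mem_insert_iff, Set.mem_singleton_iff]
    push_neg
    exact ⟨hne1, hne2⟩
  set D := connectedComponentIn (S1 \ {SU11.toFun γ q, SU11.toFun γ r}) p with hD
  have hDsub : D ⊆ S1 \ {SU11.toFun γ q, SU11.toFun γ r} := connectedComponentIn_subset _ _
  have hDS : D ⊆ S1 := fun z hz => (hDsub hz).1
  have hEpre : IsPreconnected (SU11.toFun γ⁻¹ '' D) :=
    isPreconnected_connectedComponentIn.image _ ((toFun_continuousOn γ⁻¹).mono hDS)
  have hxE : x ∈ SU11.toFun γ⁻¹ '' D := by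
    refine ⟨p, mem_connectedComponentIn hpF, ?_⟩
    rw [← hxp, toFun_left_inv γ hxS]
  have hE_sub : SU11.toFun γ⁻¹ '' D ⊆ S1 \ {cir w s1, cir w s2} := by
    rintro _ ⟨z, hz, rfl⟩
    obtain ⟨hzS, hz2⟩ := hDsub hz
    refine ⟨toFun_mem_S1 γ⁻¹ hzS, ?_⟩
    intro hmem
    apply hz2
    have hmem' : SU11.toFun γ⁻¹ z ∈ ({q, r} : Set ℂ) := by rw [hqr]; exact hmem
    simp only [Set.mem_insert_iff, Set.mem_singleton_iff] at hmem' ⊢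
    rcases hmem' with h | h
    · left
      rw [← toFun_right_inv γ hzS, h]
    · right
      rw [← toFun_right_inv γ hzS, h]
  obtain ⟨tx, htx, rfl⟩ := hxU
  have hEU : SU11.toFun γ⁻¹ '' D ⊆ cir w '' Set.Ioo s1 s2 := by
    have := hEpre.subset_connectedComponentIn hxE hE_sub
    rwa [comp_eq_arc hw h12 h2 htx] at this
  intro z hz
  have hzS : z ∈ S1 := hDS hz
  have : SU11.toFun γ⁻¹ z ∈ cir w '' Set.Ioo s1 s2 := hEU ⟨z, hz, rfl⟩
  have hz2 : z ∈ SU11.toFun γ '' (cir w '' Set.Ioo s1 s2) :=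
    ⟨SU11.toFun γ⁻¹ z, this, toFun_right_inv γ hzS⟩
  exact hUV hz2

end ArcAux


/-- A point `p ∈ S¹` is a geodesic separation point of a Fuchsian group `Γ` if and only if:
there is a neighborhood `W` of `p` in `S¹` such that whenever `q, r ∈ W ∖ {p}` are distinct
points for which the open arc of `S¹` with endpoints `q` and `r` containing `p` is contained
in `W`, then for every neighborhood `V` of `p` there is `γ ∈ Γ` such that the open arc with
endpoints `γ(q)` and `γ(r)` containing `p` is contained in `V`. -/
theorem geodSepPt_iff_arc_separation (Γ : Subgroup SU11) (hΓ : IsFuchsian Γ)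
    (p : ℂ) (hp : p ∈ S1) :
    GeodSepPt Γ p ↔
      ∃ W : Set ℂ, NbhdInS1 W p ∧
        ∀ q r : ℂ, q ∈ W → r ∈ W → q ≠ p → r ≠ p → q ≠ r →
          connectedComponentIn (S1 \ {q, r}) p ⊆ W →
          ∀ V : Set ℂ, NbhdInS1 V p →
            ∃ γ ∈ Γ, p ≠ SU11.toFun γ q ∧ p ≠ SU11.toFun γ r ∧
              connectedComponentIn (S1 \ {SU11.toFun γ q, SU11.toFun γ r}) p ⊆ V := by
  constructor
  · rintro ⟨W, hW, hmain⟩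
    refine ⟨W, hW, ?_⟩
    intro q r hqW hrW hqp hrp hqr hcomp V hV
    have hqS : q ∈ S1 := hW.1 hqW
    have hrS : r ∈ S1 := hW.1 hrW
    have hsmem : ArcAux.garg q r ∈ Set.Ioo 0 (2 * Real.pi) :=
      ArcAux.garg_mem hqS hrS (Ne.symm hqr)
    have htmem : ArcAux.garg q p ∈ Set.Ioo 0 (2 * Real.pi) :=
      ArcAux.garg_mem hqS hp (Ne.symm hqp)
    set s := ArcAux.garg q r with hsdef
    set t := ArcAux.garg q p with htdef
    have hr_eq : ArcAux.cir q s = r := ArcAux.exp_garg hqS hrS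
    have hp_eq : ArcAux.cir q t = p := ArcAux.exp_garg hqS hp
    have hts : t ≠ s := by
      intro h
      apply hrp
      rw [← hr_eq, ← h, hp_eq]
    obtain ⟨V0, hV0open, hpV0, hV0sub⟩ := ArcAux.nbhd_shrink hV hp
    rcases lt_or_gt_of_ne hts with hlt | hgt
    · -- t < s : U is the arc from 0 to s
      have h12 : (0:ℝ) < s := hsmem.1
      have h2 : s < 0 + 2 * Real.pi := by linarith [hsmem.2]
      have hpair : ({q, r} : Set ℂ) = {ArcAux.cir q 0, ArcAux.cir q s} := by
        rw [ArcAux.cir_zero, hr_eq]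
      have hcompU := ArcAux.comp_eq_arc hqS h12 h2 (t := t) ⟨htmem.1, hlt⟩
      rw [ArcAux.cir_zero, hr_eq, hp_eq] at hcompU
      have hUW : ArcAux.cir q '' Set.Ioo 0 s ⊆ W := by rw [← hcompU]; exact hcomp
      rcases hmain _ (ArcAux.arc_open hqS h12 h2) (ArcAux.arc_preconn q 0 s)
          (by rw [← hp_eq]; exact ⟨t, ⟨htmem.1, hlt⟩, rfl⟩) hUW with hcc | hcc
      · obtain ⟨γ, hγ, hpU, hUV⟩ := hcc V0 hV0open hpV0
        obtain ⟨e1, e2, e3⟩ :=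
          ArcAux.workhorse γ hqS h12 h2 hp hqS hrS hpair hpU (hUV.trans hV0sub)
        exact ⟨γ, hγ, e1, e2, e3⟩
      · have hcompl : S1 \ closure (ArcAux.cir q '' Set.Ioo 0 s)
            = ArcAux.cir q '' Set.Ioo s (0 + 2 * Real.pi) :=
          ArcAux.S1_diff_closure hqS h12 h2
        rw [hcompl] at hcc
        obtain ⟨γ, hγ, hpU, hUV⟩ := hcc V0 hV0open hpV0
        have hpair2 : ({q, r} : Set ℂ) = {ArcAux.cir q s, ArcAux.cir q (0 + 2 * Real.pi)} := by
          rw [zero_add, ArcAux.cir_two_pi, hr_eq]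
          exact Set.pair_comm q r
        obtain ⟨e1, e2, e3⟩ := ArcAux.workhorse γ hqS h2
            (show 0 + 2 * Real.pi < s + 2 * Real.pi by linarith) hp hqS hrS hpair2 hpU
            (hUV.trans hV0sub)
        exact ⟨γ, hγ, e1, e2, e3⟩
    · -- s < t : U is the arc from s to 2π
      have h12 : s < 2 * Real.pi := hsmem.2
      have h2 : 2 * Real.pi < s + 2 * Real.pi := by linarith [hsmem.1]
      have hpair : ({q, r} : Set ℂ) = {ArcAux.cir q s, ArcAux.cir q (2 * Real.pi)} := by
        rw [ArcAux.cir_two_pi, hr_eq]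
        exact Set.pair_comm q r
      have hcompU := ArcAux.comp_eq_arc hqS h12 h2 (t := t) ⟨hgt, htmem.2⟩
      rw [ArcAux.cir_two_pi, hr_eq, hp_eq, Set.pair_comm r q] at hcompU
      have hUW : ArcAux.cir q '' Set.Ioo s (2 * Real.pi) ⊆ W := by rw [← hcompU]; exact hcomp
      rcases hmain _ (ArcAux.arc_open hqS h12 h2) (ArcAux.arc_preconn q s (2 * Real.pi))
          (by rw [← hp_eq]; exact ⟨t, ⟨hgt, htmem.2⟩, rfl⟩) hUW with hcc | hcc
      · obtain ⟨γ, hγ, hpU, hUV⟩ := hcc V0 hV0open hpV0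
        obtain ⟨e1, e2, e3⟩ :=
          ArcAux.workhorse γ hqS h12 h2 hp hqS hrS hpair hpU (hUV.trans hV0sub)
        exact ⟨γ, hγ, e1, e2, e3⟩
      · have hcompl : S1 \ closure (ArcAux.cir q '' Set.Ioo s (2 * Real.pi))
            = ArcAux.cir q '' Set.Ioo (2 * Real.pi) (s + 2 * Real.pi) :=
          ArcAux.S1_diff_closure hqS h12 h2
        rw [hcompl] at hcc
        obtain ⟨γ, hγ, hpU, hUV⟩ := hcc V0 hV0open hpV0
        have hpair2 : ({q, r} : Set ℂ)
            = {ArcAux.cir q (2 * Real.pi), ArcAux.cir q (s + 2 * Real.pi)} := by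
          rw [ArcAux.cir_two_pi, ArcAux.cir_add_two_pi, hr_eq]
        obtain ⟨e1, e2, e3⟩ := ArcAux.workhorse γ hqS h2
            (show s + 2 * Real.pi < 2 * Real.pi + 2 * Real.pi by linarith) hp hqS hrS hpair2 hpU
            (hUV.trans hV0sub)
        exact ⟨γ, hγ, e1, e2, e3⟩
  · rintro ⟨W, ⟨hWS, hWmem⟩, hmain⟩
    rw [mem_nhdsWithin] at hWmem
    obtain ⟨O, hO, hpO, hOW⟩ := hWmem
    have hw : -p ∈ S1 := by
      rw [ArcAux.mem_S1_iff] at hp ⊢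
      simpa using hp
    have hp_eq : ArcAux.cir (-p) Real.pi = p := by
      rw [ArcAux.cir, Complex.exp_pi_mul_I]
      ring
    have hcont : Continuous (ArcAux.cir (-p)) := ArcAux.continuous_cir _
    obtain ⟨δ, hδ, hball⟩ := Metric.isOpen_iff.mp (hO.preimage hcont) Real.pi
      (by rw [Set.mem_preimage, hp_eq]; exact hpO)
    set ε := min (δ / 2) (Real.pi / 2) with hεdef
    have hε0 : 0 < ε := lt_min (by linarith) (by linarith [Real.pi_pos])
    have hεδ : ε < δ := lt_of_le_of_lt (min_le_left _ _) (by linarith)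
    have hεπ : ε ≤ Real.pi / 2 := min_le_right _ _
    have hIccW : ∀ x ∈ Set.Icc (Real.pi - ε) (Real.pi + ε), ArcAux.cir (-p) x ∈ W := by
      intro x hx
      apply hOW
      refine ⟨hball ?_, ArcAux.cir_mem hw x⟩
      rw [Metric.mem_ball, Real.dist_eq, abs_sub_lt_iff]
      constructor <;> [linarith [hx.2]; linarith [hx.1]]
    have h12 : Real.pi - ε < Real.pi + ε := by linarith
    have h2 : Real.pi + ε < Real.pi - ε + 2 * Real.pi := by linarith [Real.pi_pos]
    have hW'open : OpenInS1 (ArcAux.cir (-p) '' Set.Ioo (Real.pi - ε) (Real.pi + ε)) :=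
      ArcAux.arc_open hw h12 h2
    have hpW' : p ∈ ArcAux.cir (-p) '' Set.Ioo (Real.pi - ε) (Real.pi + ε) :=
      ⟨Real.pi, ⟨by linarith, by linarith⟩, hp_eq⟩
    have hW'W : ArcAux.cir (-p) '' Set.Ioo (Real.pi - ε) (Real.pi + ε) ⊆ W := by
      rintro z ⟨x, hx, rfl⟩
      exact hIccW x ⟨hx.1.le, hx.2.le⟩
    refine ⟨_, ArcAux.openInS1_nbhd hW'open hpW', ?_⟩
    intro U hUopen hUpre hpU hUW'
    obtain ⟨hUS, OU, hOU, hUOU⟩ := hUopen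
    have hIoosub : ∀ x, x ∈ Set.Ioo (Real.pi - ε) (Real.pi + ε) → x ∈ Set.Ioo 0 (2 * Real.pi) := by
      intro x hx
      constructor
      · have := hx.1; linarith [Real.pi_pos]
      · have := hx.2; linarith [Real.pi_pos]
    have himg : ∀ z ∈ U, (ArcAux.garg (-p) z ∈ Set.Ioo (Real.pi - ε) (Real.pi + ε) ∧
        ArcAux.garg (-p) z ∈ Set.Ioo 0 (2 * Real.pi)) ∧ ArcAux.cir (-p) (ArcAux.garg (-p) z) = z := by
      intro z hz
      obtain ⟨x, hx, hxz⟩ := hUW' hz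
      have hx2π : x ∈ Set.Ioo 0 (2 * Real.pi) := hIoosub x hx
      have hgx : ArcAux.garg (-p) z = x := by rw [← hxz]; exact ArcAux.garg_cir hw hx2π
      rw [hgx, hxz]
      exact ⟨⟨hx, hx2π⟩, rfl⟩
    set T := {x : ℝ | x ∈ Set.Ioo (Real.pi - ε) (Real.pi + ε) ∧ ArcAux.cir (-p) x ∈ U} with hTdef
    have hTopen : IsOpen T := by
      have hTeq2 : T = (ArcAux.cir (-p) ⁻¹' OU) ∩ Set.Ioo (Real.pi - ε) (Real.pi + ε) := by
        ext x
        constructor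
        · rintro ⟨hx1, hx2⟩
          refine ⟨?_, hx1⟩
          rw [Set.mem_preimage]
          rw [hUOU] at hx2
          exact hx2.1
        · rintro ⟨hx1, hx2⟩
          refine ⟨hx2, ?_⟩
          rw [hUOU]
          exact ⟨hx1, ArcAux.cir_mem hw x⟩
      rw [hTeq2]
      exact (hOU.preimage hcont).inter isOpen_Ioo
    have hTeq : T = ArcAux.garg (-p) '' U := by
      ext x
      constructor
      · rintro ⟨hx1, hx2⟩
        exact ⟨ArcAux.cir (-p) x, hx2, ArcAux.garg_cir hw (hIoosub x hx1)⟩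
      · rintro ⟨z, hz, rfl⟩
        obtain ⟨⟨hg1, _⟩, hg3⟩ := himg z hz
        exact ⟨hg1, by rw [hg3]; exact hz⟩
    have hUsub' : U ⊆ S1 \ {-p} := by
      intro z hz
      refine ⟨hUS hz, ?_⟩
      obtain ⟨x, hx, hxz⟩ := hUW' hz
      intro hzp
      rw [Set.mem_singleton_iff] at hzp
      have : ArcAux.cir (-p) x = ArcAux.cir (-p) 0 := by
        rw [ArcAux.cir_zero, hxz, hzp]
      exact ArcAux.cir_ne_of_window hw
        (by have := (hIoosub x hx).1; exact ne_of_gt this)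
        (by rw [sub_zero, abs_of_pos (hIoosub x hx).1]; exact (hIoosub x hx).2) this
    have hTpre : IsPreconnected T := by
      rw [hTeq]
      exact hUpre.image _ ((ArcAux.garg_continuousOn hw).mono hUsub')
    have hπT : Real.pi ∈ T := ⟨⟨by linarith, by linarith⟩, by rw [hp_eq]; exact hpU⟩
    obtain ⟨a, b, hla, haπ, hπb, hbu, hTIoo⟩ := ArcAux.open_preconn_eq_Ioo hTopen hTpre hπT
      (fun x hx => hx.1)
    have hUeq : U = ArcAux.cir (-p) '' Set.Ioo a b := by
      ext z
      constructor
      · intro hz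
        obtain ⟨⟨hg1, _⟩, hg3⟩ := himg z hz
        refine ⟨ArcAux.garg (-p) z, ?_, hg3⟩
        rw [← hTIoo]
        exact ⟨hg1, by rw [hg3]; exact hz⟩
      · rintro ⟨x, hx, rfl⟩
        have hxT : x ∈ T := by rw [hTIoo]; exact hx
        exact hxT.2
    have hab : a < b := lt_trans haπ hπb
    have h2ab : b < a + 2 * Real.pi := by linarith [Real.pi_pos]
    have hqW : ArcAux.cir (-p) a ∈ W := hIccW a ⟨hla, by linarith⟩
    have hrW : ArcAux.cir (-p) b ∈ W := hIccW b ⟨by linarith, hbu⟩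
    have hqp : ArcAux.cir (-p) a ≠ p := by
      have := ArcAux.cir_ne_of_between hw haπ (by linarith [Real.pi_pos])
      rwa [hp_eq] at this
    have hrp : ArcAux.cir (-p) b ≠ p := by
      have := (ArcAux.cir_ne_of_between hw hπb (by linarith [Real.pi_pos])).symm
      rwa [hp_eq] at this
    have hqr : ArcAux.cir (-p) a ≠ ArcAux.cir (-p) b :=
      ArcAux.cir_ne_of_between hw hab (by linarith [Real.pi_pos])
    have hcompU : connectedComponentIn (S1 \ {ArcAux.cir (-p) a, ArcAux.cir (-p) b}) p = U := by
      rw [hUeq]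
      have := ArcAux.comp_eq_arc hw hab h2ab ⟨haπ, hπb⟩
      rwa [hp_eq] at this
    have hmainqr := hmain (ArcAux.cir (-p) a) (ArcAux.cir (-p) b) hqW hrW hqp hrp hqr
      (by rw [hcompU]; exact hUW'.trans hW'W)
    by_cases hcase : CanConcentrate Γ U p
    · exact Or.inl hcase
    · right
      obtain ⟨V0, hV0open, hpV0, hV0⟩ : ∃ V0, OpenInS1 V0 ∧ p ∈ V0 ∧
          ∀ γ ∈ Γ, ¬(p ∈ SU11.toFun γ '' U ∧ SU11.toFun γ '' U ⊆ V0) := by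
        by_contra hcon
        push_neg at hcon
        apply hcase
        intro V' hV' hpV'
        obtain ⟨γ, hγ, hh1, hh2⟩ := hcon V' hV' hpV'
        exact ⟨γ, hγ, hh1, hh2⟩
      intro V hVopen hpV
      obtain ⟨γ, hγ, hne1, hne2, hD⟩ := hmainqr (V ∩ V0)
        (ArcAux.openInS1_nbhd (ArcAux.openInS1_inter hVopen hV0open) ⟨hpV, hpV0⟩)
      have hxS : SU11.toFun γ⁻¹ p ∈ S1 := ArcAux.toFun_mem_S1 γ⁻¹ hp
      have hγx : SU11.toFun γ (SU11.toFun γ⁻¹ p) = p := ArcAux.toFun_right_inv γ hp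
      have hxq : SU11.toFun γ⁻¹ p ≠ ArcAux.cir (-p) a := fun h => hne1 (by rw [← h, hγx])
      have hxr : SU11.toFun γ⁻¹ p ≠ ArcAux.cir (-p) b := fun h => hne2 (by rw [← h, hγx])
      have himage : ∀ s1 s2 : ℝ, s1 < s2 → s2 < s1 + 2 * Real.pi →
          ({ArcAux.cir (-p) a, ArcAux.cir (-p) b} : Set ℂ)
            = {ArcAux.cir (-p) s1, ArcAux.cir (-p) s2} →
          SU11.toFun γ⁻¹ p ∈ ArcAux.cir (-p) '' Set.Ioo s1 s2 →
          p ∈ SU11.toFun γ '' (ArcAux.cir (-p) '' Set.Ioo s1 s2) ∧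
          SU11.toFun γ '' (ArcAux.cir (-p) '' Set.Ioo s1 s2) ⊆ V ∩ V0 := by
        intro s1 s2 hs12 hs2 hpair hxmem
        refine ⟨⟨SU11.toFun γ⁻¹ p, hxmem, hγx⟩, ?_⟩
        have hAS : ArcAux.cir (-p) '' Set.Ioo s1 s2 ⊆ S1 := ArcAux.arc_subset_S1 hw _
        have hApre : IsPreconnected (SU11.toFun γ '' (ArcAux.cir (-p) '' Set.Ioo s1 s2)) :=
          (ArcAux.arc_preconn _ _ _).image _ ((ArcAux.toFun_continuousOn γ).mono hAS)
        have hendpt : ∀ c ∈ ({ArcAux.cir (-p) a, ArcAux.cir (-p) b} : Set ℂ),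
            c ∉ ArcAux.cir (-p) '' Set.Ioo s1 s2 := by
          intro c hc
          rw [hpair] at hc
          simp only [Set.mem_insert_iff, Set.mem_singleton_iff] at hc
          rcases hc with hc | hc <;> rw [hc]
          · exact (ArcAux.endpoint_not_mem hw hs2.le).1
          · exact (ArcAux.endpoint_not_mem hw hs2.le).2
        have hAsub : SU11.toFun γ '' (ArcAux.cir (-p) '' Set.Ioo s1 s2) ⊆
            S1 \ {SU11.toFun γ (ArcAux.cir (-p) a), SU11.toFun γ (ArcAux.cir (-p) b)} := by
          rintro _ ⟨y, hy, rfl⟩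
          have hyS := hAS hy
          refine ⟨ArcAux.toFun_mem_S1 γ hyS, ?_⟩
          simp only [Set.mem_insert_iff, Set.mem_singleton_iff]
          push_neg
          constructor
          · intro h
            have : y = ArcAux.cir (-p) a :=
              ArcAux.toFun_inj γ hyS (ArcAux.cir_mem hw a) h
            exact hendpt _ (Set.mem_insert _ _) (this ▸ hy)
          · intro h
            have : y = ArcAux.cir (-p) b :=
              ArcAux.toFun_inj γ hyS (ArcAux.cir_mem hw b) h
            exact hendpt _ (Set.mem_insert_of_mem _ (Set.mem_singleton _)) (this ▸ hy)
        have := hApre.subset_connectedComponentIn ⟨SU11.toFun γ⁻¹ p, hxmem, hγx⟩ hAsub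
        exact this.trans hD
      rcases ArcAux.partition hw hab h2ab hxS with h | h | h | h
      · exact absurd h hxq
      · exact absurd h hxr
      · exfalso
        have := himage a b hab h2ab rfl h
        rw [← hUeq] at this
        exact hV0 γ hγ ⟨this.1, this.2.trans Set.inter_subset_right⟩
      · have hpair2 : ({ArcAux.cir (-p) a, ArcAux.cir (-p) b} : Set ℂ)
            = {ArcAux.cir (-p) b, ArcAux.cir (-p) (a + 2 * Real.pi)} := by
          rw [ArcAux.cir_add_two_pi]
          exact Set.pair_comm _ _
        have hres := himage b (a + 2 * Real.pi) h2ab (by linarith) hpair2 h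
        have hUc : S1 \ closure U = ArcAux.cir (-p) '' Set.Ioo b (a + 2 * Real.pi) := by
          rw [hUeq]
          exact ArcAux.S1_diff_closure hw hab h2ab
        rw [← hUc] at hres
        exact ⟨γ, hγ, hres.1, hres.2.trans Set.inter_subset_left⟩
end
end
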